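/- Let (X,d) be a metric space with a translation-invariant metric on a vector space, and suppose an action of a semitopological semigroup S on a subset K of X is super asymptotically d-nonexpansive with respect to (not necessarily closed) left ideals. If the action is separately continuous for a topology τ weaker than the d-topology and d is τ-lower semicontinuous, then the ideals can be taken closed: for each x ∈ K and t ∈ S there exists a τ-closed left ideal J of S with d(st.x, st.y) ≤ d(x,y) for all s ∈ J and y ∈ K. -/

import Mathlib

open scoped Topology

/-- for a super asymptotically `d`-nonexpansive action of a
semitopological semigroup on `K ⊆ X`, where the orbit maps `s ↦ s.x` are
`τ`-continuous, `τ` is weaker than the `d`-topology and `d` is `τ`-lower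
semicontinuous, the witnessing left ideals can be taken closed. -/
theorem stmt17 {S X : Type*} [Semigroup S] [TopologicalSpace S] [T2Space S]
    [AddCommGroup X] [TopologicalSpace X]
    (hlc : ∀ t : S, Continuous fun s : S => t * s)
    (hrc : ∀ t : S, Continuous fun s : S => s * t)
    (d : X → X → ℝ)
    (hsymm : ∀ x y, d x y = d y x)
    (htri : ∀ x y z, d x z ≤ d x y + d y z)
    (hzero : ∀ x y, d x y = 0 ↔ x = y)
    (hinv : ∀ x y z, d (x + y) (x + z) = d y z)
    (hweak : ∀ U : Set X, IsOpen U → ∀ x ∈ U, ∃ ε > 0, {y | d x y < ε} ⊆ U)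
    (hlsc : LowerSemicontinuous fun p : X × X => d p.1 p.2)
    (K : Set X) (act : S → X → X)
    (hmaps : ∀ s : S, ∀ x ∈ K, act s x ∈ K)
    (haction : ∀ s t : S, ∀ x : X, act (s * t) x = act s (act t x))
    (hscont : ∀ x : X, Continuous fun s : S => act s x)
    (hsuper : ∀ x ∈ K, ∀ t : S, ∃ I : Set S, I.Nonempty ∧
      (∀ a : S, ∀ b ∈ I, a * b ∈ I) ∧
      ∀ s ∈ I, ∀ y ∈ K, d (act (s * t) x) (act (s * t) y) ≤ d x y) :
    ∀ x ∈ K, ∀ t : S, ∃ J : Set S, J.Nonempty ∧ IsClosed J ∧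
      (∀ a : S, ∀ b ∈ J, a * b ∈ J) ∧
      ∀ s ∈ J, ∀ y ∈ K, d (act (s * t) x) (act (s * t) y) ≤ d x y := by
  intro x hx t
  obtain ⟨I, hne, hideal, hI⟩ := hsuper x hx t
  refine ⟨closure I, hne.closure, isClosed_closure, ?_, ?_⟩
  · intro a b hb
    exact map_mem_closure (hlc a) hb (fun c hc => hideal a c hc)
  · intro s hs y hy
    have hg : Continuous fun s : S => ((act (s * t) x, act (s * t) y) : X × X) :=
      ((hscont x).comp (hrc t)).prodMk ((hscont y).comp (hrc t))
    have hf : LowerSemicontinuous fun s : S => d (act (s * t) x) (act (s * t) y) :=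
      LowerSemicontinuous.comp hlsc hg
    have hcl : IsClosed {s : S | d (act (s * t) x) (act (s * t) y) ≤ d x y} :=
      hf.isClosed_preimage (d x y)
    exact hcl.closure_subset_iff.2 (fun c hc => hI c hc y hy) hs
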